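/- Let $a$ be an odd positive integer. For each $n \ge 1$ and $1 \le i \le n$, let $t_i = \frac{i}{n} - \frac{1}{2n}$ and define $D_i^{(a)} = i \binom{n}{i} \int_0^1 |x - t_i|^a \, x^{i-1} (1-x)^{n-i} \, dx$. Then $\sum_{i=1}^{n} D_i^{(a)} = \Theta\left(\frac{1}{n^{a/2-1}}\right)$; that is, there exist constants $c_2 \ge c_1 > 0$ and $N$ such that for all $n \ge N$, $c_1 \, n^{1-a/2} \le \sum_{i=1}^{n} D_i^{(a)} \le c_2 \, n^{1-a/2}$. -/

import Mathlib

open MeasureTheory intervalIntegral Set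

lemma Bint_succ' (j m : ℕ) :
    (∫ x in (0:ℝ)..1, x ^ j * (1 - x) ^ (m+1))
      = ((m:ℝ) + 1) / (j + 1) * ∫ x in (0:ℝ)..1, x ^ (j+1) * (1 - x) ^ m := by
  have h : ∀ x : ℝ, HasDerivAt (fun x : ℝ => x ^ (j+1) * (1 - x) ^ (m+1))
      (((j:ℝ)+1) * x ^ j * (1-x)^(m+1) - ((m:ℝ)+1) * x^(j+1) * (1-x)^m) x := by
    intro x
    have h1 : HasDerivAt (fun x : ℝ => x ^ (j+1)) (((j:ℝ)+1) * x ^ j) x := by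
      simpa using (hasDerivAt_pow (j+1) x)
    have h2 : HasDerivAt (fun x : ℝ => (1 - x) ^ (m+1)) (-(((m:ℝ)+1) * (1-x) ^ m)) x := by
      have := ((hasDerivAt_pow (m+1) (1 - x)).comp x
        ((hasDerivAt_const x (1:ℝ)).sub (hasDerivAt_id x)))
      simpa [Function.comp_def] using this
    have := h1.mul h2
    exact this.congr_deriv (by ring)
  have key := integral_eq_sub_of_hasDerivAt (f := fun x : ℝ => x ^ (j+1) * (1 - x) ^ (m+1))
    (a := 0) (b := 1) (fun x _ => h x) (by apply Continuous.intervalIntegrable; continuity)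
  simp only [one_pow, sub_self, zero_pow, mul_zero, zero_mul, sub_zero, ne_eq] at key
  have key2 : ∫ x in (0:ℝ)..1,
      (((j:ℝ)+1) * x ^ j * (1-x)^(m+1) - ((m:ℝ)+1) * x^(j+1) * (1-x)^m) = 0 := by
    rw [key]; norm_num
  have hsplit : (∫ x in (0:ℝ)..1, (((j:ℝ)+1) * x ^ j * (1-x)^(m+1) - ((m:ℝ)+1) * x^(j+1) * (1-x)^m))
      = ((j:ℝ)+1) * (∫ x in (0:ℝ)..1, x ^ j * (1 - x) ^ (m+1))
        - ((m:ℝ)+1) * ∫ x in (0:ℝ)..1, x ^ (j+1) * (1 - x) ^ m := by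
    rw [← intervalIntegral.integral_const_mul, ← intervalIntegral.integral_const_mul,
      ← intervalIntegral.integral_sub (by apply Continuous.intervalIntegrable; continuity)
        (by apply Continuous.intervalIntegrable; continuity)]
    apply integral_congr
    intro x _
    ring
  rw [hsplit] at key2
  have hj : ((j:ℝ)+1) ≠ 0 := by positivity
  field_simp at key2 ⊢
  linarith

lemma Bint_eq (m j : ℕ) : (∫ x in (0:ℝ)..1, x ^ j * (1 - x) ^ m)
    = (j.factorial * m.factorial : ℝ) / (j + m + 1).factorial := by
  induction m generalizing j with
  | zero =>
      simp only [pow_zero, mul_one, integral_pow, one_pow, zero_pow, Nat.factorial]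
      rw [show (0:ℝ)^(j+1) = 0 from by simp]
      push_cast
      have h1 : ((j:ℝ)+1) ≠ 0 := by positivity
      have h2 : (j.factorial : ℝ) ≠ 0 := by positivity
      field_simp
      norm_num
  | succ m ih =>
      rw [Bint_succ', ih (j+1)]
      rw [show j + 1 + m + 1 = j + (m+1) + 1 from by omega]
      rw [Nat.factorial_succ (j), Nat.factorial_succ m]
      push_cast
      have h1 : ((j:ℝ)+1) ≠ 0 := by positivity
      have h2 : ((j + (m+1) + 1).factorial : ℝ) ≠ 0 := by positivity
      field_simp


noncomputable def mI (j m k : ℕ) (t : ℝ) : ℝ :=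
  ∫ x in (0:ℝ)..1, (x - t) ^ k * (x ^ j * (1 - x) ^ m)

noncomputable def aI (j m k : ℕ) (t : ℝ) : ℝ :=
  ∫ x in (0:ℝ)..1, |x - t| ^ k * (x ^ j * (1 - x) ^ m)

lemma cont_intable (f : ℝ → ℝ) (hf : Continuous f) :
    IntervalIntegrable f MeasureTheory.volume 0 1 := hf.intervalIntegrable 0 1

lemma stein1 (j m : ℕ) (t : ℝ) :
    ((j:ℝ) + m + 2) * mI j m 1 t = (((j:ℝ)+1) - ((j:ℝ)+m+2)*t) * mI j m 0 t := by
  have h : ∀ x : ℝ, HasDerivAt (fun x : ℝ => x ^ (j+1) * (1 - x) ^ (m+1))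
      (((j:ℝ)+1) * x ^ j * (1-x)^(m+1) - ((m:ℝ)+1) * x^(j+1) * (1-x)^m) x := by
    intro x
    have h1 : HasDerivAt (fun x : ℝ => x ^ (j+1)) (((j:ℝ)+1) * x ^ j) x := by
      simpa using (hasDerivAt_pow (j+1) x)
    have h2 : HasDerivAt (fun x : ℝ => (1 - x) ^ (m+1)) (-(((m:ℝ)+1) * (1-x) ^ m)) x := by
      have := ((hasDerivAt_pow (m+1) (1 - x)).comp x
        ((hasDerivAt_const x (1:ℝ)).sub (hasDerivAt_id x)))
      simpa [Function.comp_def] using this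
    have := h1.mul h2
    exact this.congr_deriv (by ring)
  have key := integral_eq_sub_of_hasDerivAt (f := fun x : ℝ => x ^ (j+1) * (1 - x) ^ (m+1))
    (a := 0) (b := 1) (fun x _ => h x) (by apply Continuous.intervalIntegrable; continuity)
  simp only [one_pow, sub_self, zero_pow, mul_zero, zero_mul, sub_zero, ne_eq] at key
  have key2 : ∫ x in (0:ℝ)..1, (((j:ℝ)+1) * x ^ j * (1-x)^(m+1) - ((m:ℝ)+1) * x^(j+1) * (1-x)^m) = 0 := by
    rw [key]; norm_num
  have hsplit : (∫ x in (0:ℝ)..1, (((j:ℝ)+1) * x ^ j * (1-x)^(m+1) - ((m:ℝ)+1) * x^(j+1) * (1-x)^m))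
      = (((j:ℝ)+1) - ((j:ℝ)+m+2)*t) * mI j m 0 t - ((j:ℝ) + m + 2) * mI j m 1 t := by
    rw [mI, mI, ← intervalIntegral.integral_const_mul, ← intervalIntegral.integral_const_mul,
      ← intervalIntegral.integral_sub (by apply Continuous.intervalIntegrable; continuity)
        (by apply Continuous.intervalIntegrable; continuity)]
    apply integral_congr
    intro x _
    ring
  rw [hsplit] at key2
  linarith

lemma stein2 (j m l : ℕ) (t : ℝ) :
    ((j:ℝ) + m + 3 + l) * mI j m (l+2) t
      = ((l:ℝ)+1) * (t*(1-t)) * mI j m l t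
        + ((((j:ℝ)+1) - ((j:ℝ)+m+2)*t) + ((l:ℝ)+1)*(1-2*t)) * mI j m (l+1) t := by
  have h : ∀ x : ℝ, HasDerivAt (fun x : ℝ => x ^ (j+1) * (1 - x) ^ (m+1) * (x - t)^(l+1))
      ((((j:ℝ)+1) * x ^ j * (1-x)^(m+1) - ((m:ℝ)+1) * x^(j+1) * (1-x)^m) * (x-t)^(l+1)
        + x^(j+1)*(1-x)^(m+1) * (((l:ℝ)+1) * (x-t)^l)) x := by
    intro x
    have h1 : HasDerivAt (fun x : ℝ => x ^ (j+1)) (((j:ℝ)+1) * x ^ j) x := by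
      simpa using (hasDerivAt_pow (j+1) x)
    have h2 : HasDerivAt (fun x : ℝ => (1 - x) ^ (m+1)) (-(((m:ℝ)+1) * (1-x) ^ m)) x := by
      have := ((hasDerivAt_pow (m+1) (1 - x)).comp x
        ((hasDerivAt_const x (1:ℝ)).sub (hasDerivAt_id x)))
      simpa [Function.comp_def] using this
    have h3 : HasDerivAt (fun x : ℝ => (x - t)^(l+1)) (((l:ℝ)+1) * (x-t)^l) x := by
      have := ((hasDerivAt_pow (l+1) (x - t)).comp x
        ((hasDerivAt_id x).sub (hasDerivAt_const x t)))
      simpa [Function.comp_def] using this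
    have := (h1.fun_mul h2).mul h3
    exact this.congr_deriv (by ring)
  have key := integral_eq_sub_of_hasDerivAt
    (f := fun x : ℝ => x ^ (j+1) * (1 - x) ^ (m+1) * (x - t)^(l+1))
    (a := 0) (b := 1) (fun x _ => h x) (by apply Continuous.intervalIntegrable; continuity)
  simp only [one_pow, sub_self, zero_pow, mul_zero, zero_mul, sub_zero, ne_eq] at key
  have key2 : ∫ x in (0:ℝ)..1,
      ((((j:ℝ)+1) * x ^ j * (1-x)^(m+1) - ((m:ℝ)+1) * x^(j+1) * (1-x)^m) * (x-t)^(l+1)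
        + x^(j+1)*(1-x)^(m+1) * (((l:ℝ)+1) * (x-t)^l)) = 0 := by
    rw [key]; norm_num
  have hsplit : (∫ x in (0:ℝ)..1,
      ((((j:ℝ)+1) * x ^ j * (1-x)^(m+1) - ((m:ℝ)+1) * x^(j+1) * (1-x)^m) * (x-t)^(l+1)
        + x^(j+1)*(1-x)^(m+1) * (((l:ℝ)+1) * (x-t)^l)))
      = ((l:ℝ)+1) * (t*(1-t)) * mI j m l t
        + ((((j:ℝ)+1) - ((j:ℝ)+m+2)*t) + ((l:ℝ)+1)*(1-2*t)) * mI j m (l+1) t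
        - ((j:ℝ) + m + 3 + l) * mI j m (l+2) t := by
    rw [mI, mI, mI, ← intervalIntegral.integral_const_mul, ← intervalIntegral.integral_const_mul,
      ← intervalIntegral.integral_const_mul,
      ← intervalIntegral.integral_add (by apply Continuous.intervalIntegrable; continuity)
        (by apply Continuous.intervalIntegrable; continuity),
      ← intervalIntegral.integral_sub (by apply Continuous.intervalIntegrable; continuity)
        (by apply Continuous.intervalIntegrable; continuity)]
    apply integral_congr
    intro x _
    ring
  rw [hsplit] at key2
  linarith


lemma Bint_pos (j m : ℕ) : 0 < ∫ x in (0:ℝ)..1, x ^ j * (1 - x) ^ m := by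
  rw [Bint_eq]
  positivity

lemma mI_zero_eq (j m : ℕ) (t : ℝ) : mI j m 0 t = ∫ x in (0:ℝ)..1, x ^ j * (1 - x) ^ m := by
  rw [mI]
  apply intervalIntegral.integral_congr
  intro x _
  simp

lemma mI_zero_pos (j m : ℕ) (t : ℝ) : 0 < mI j m 0 t := by
  rw [mI_zero_eq]; exact Bint_pos j m

lemma norm_eq (j m : ℕ) :
    ((j:ℝ)+1) * (((j+m+1).choose (j+1) : ℕ) : ℝ) * (∫ x in (0:ℝ)..1, x ^ j * (1 - x) ^ m) = 1 := by
  rw [Bint_eq]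
  have h := Nat.choose_mul_factorial_mul_factorial (show j+1 ≤ j+m+1 by omega)
  rw [show j+m+1-(j+1) = m by omega] at h
  have h2 : ((j+m+1).choose (j+1) : ℝ) * (j+1).factorial * m.factorial
      = (j+m+1).factorial := by exact_mod_cast congrArg (Nat.cast : ℕ → ℝ) h
  rw [Nat.factorial_succ] at h2
  have hf : ((j+m+1).factorial : ℝ) ≠ 0 := by positivity
  have hj : ((j:ℝ)+1) ≠ 0 := by positivity
  push_cast at h2 ⊢
  field_simp
  nlinarith [h2]

lemma aI_nonneg (j m k : ℕ) (t : ℝ) : 0 ≤ aI j m k t := by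
  rw [aI]
  apply intervalIntegral.integral_nonneg zero_le_one
  intro x hx
  have h1 : (0:ℝ) ≤ 1 - x := by linarith [hx.2]
  have h0 : (0:ℝ) ≤ x := hx.1
  positivity

lemma mI_even_eq (j m k : ℕ) (t : ℝ) : mI j m (2*k) t = aI j m (2*k) t := by
  rw [mI, aI]
  apply intervalIntegral.integral_congr
  intro x _
  show (x - t) ^ (2*k) * (x ^ j * (1 - x) ^ m) = |x - t| ^ (2*k) * (x ^ j * (1 - x) ^ m)
  rw [pow_mul, pow_mul, sq_abs]

lemma mI2_split (j m : ℕ) (t : ℝ) :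
    mI j m 2 t = (∫ x in (0:ℝ)..1, x ^ (j+2) * (1 - x) ^ m)
      - 2*t*(∫ x in (0:ℝ)..1, x ^ (j+1) * (1 - x) ^ m)
      + t^2*(∫ x in (0:ℝ)..1, x ^ j * (1 - x) ^ m) := by
  have hcong : mI j m 2 t = ∫ x in (0:ℝ)..1,
      (x ^ (j+2) * (1 - x) ^ m - 2*t*(x ^ (j+1) * (1 - x) ^ m) + t^2*(x ^ j * (1 - x) ^ m)) := by
    rw [mI]
    apply intervalIntegral.integral_congr
    intro x _
    show (x - t) ^ 2 * (x ^ j * (1 - x) ^ m) = _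
    ring
  rw [hcong,
    intervalIntegral.integral_add
      (IntervalIntegrable.sub (by apply Continuous.intervalIntegrable; continuity)
        (by apply Continuous.intervalIntegrable; continuity))
      (by apply Continuous.intervalIntegrable; continuity),
    intervalIntegral.integral_sub (by apply Continuous.intervalIntegrable; continuity)
      (by apply Continuous.intervalIntegrable; continuity),
    intervalIntegral.integral_const_mul, intervalIntegral.integral_const_mul]

set_option maxHeartbeats 1000000 in
lemma var_lb (j m : ℕ) (t : ℝ)
    (hj4 : ((j:ℝ)+m+1) ≤ 4*((j:ℝ)+1)) (hm2 : ((j:ℝ)+m+1) ≤ 2*((m:ℝ)+1)) :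
    mI j m 0 t ≤ 96*((j:ℝ)+m+1) * mI j m 2 t := by
  have hj0 : (0:ℝ) ≤ (j:ℝ) := Nat.cast_nonneg j
  have hm0 : (0:ℝ) ≤ (m:ℝ) := Nat.cast_nonneg m
  set B0 : ℝ := ∫ x in (0:ℝ)..1, x ^ j * (1 - x) ^ m with hB0
  set B1 : ℝ := ∫ x in (0:ℝ)..1, x ^ (j+1) * (1 - x) ^ m with hB1
  set B2 : ℝ := ∫ x in (0:ℝ)..1, x ^ (j+2) * (1 - x) ^ m with hB2
  have hB0pos : 0 < B0 := Bint_pos j m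
  have e1 : ((j:ℝ)+m+2) * B1 = ((j:ℝ)+1) * B0 := by
    rw [hB1, hB0, Bint_eq, Bint_eq]
    rw [show j+1+m+1 = (j+m+1)+1 by omega, Nat.factorial_succ (j+m+1), Nat.factorial_succ j]
    have h1 : ((j+m+1).factorial : ℝ) ≠ 0 := by positivity
    push_cast
    field_simp
    ring
  have e2 : ((j:ℝ)+m+3) * B2 = ((j:ℝ)+2) * B1 := by
    rw [hB2, hB1, Bint_eq, Bint_eq]
    rw [show j+2+m+1 = ((j+m+1)+1)+1 by omega, show j+1+m+1 = (j+m+1)+1 by omega,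
      Nat.factorial_succ ((j+m+1)+1), Nat.factorial_succ (j+m+1),
      Nat.factorial_succ (j+1), Nat.factorial_succ j]
    have h1 : ((j+m+1).factorial : ℝ) ≠ 0 := by positivity
    push_cast
    field_simp
    ring
  have hd1 : ((j:ℝ)+m+2) * ((j:ℝ)+m+3) * B2 = ((j:ℝ)+2)*((j:ℝ)+1)*B0 := by
    linear_combination ((j:ℝ)+m+2)*e2 + ((j:ℝ)+2)*e1
  rw [mI_zero_eq, mI2_split, ← hB0, ← hB1, ← hB2]
  set D : ℝ := B2 - 2*t*B1 + t^2*B0 with hD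
  have hP : ((j:ℝ)+m+2)^2*((j:ℝ)+m+3)^2*D
      = ((((j:ℝ)+m+2)*((j:ℝ)+m+3)*t - ((j:ℝ)+1)*((j:ℝ)+m+3))^2)*B0
        + ((j:ℝ)+1)*((j:ℝ)+m+3)*((m:ℝ)+1)*B0 := by
    rw [hD]
    linear_combination (((j:ℝ)+m+2)*((j:ℝ)+m+3))*hd1 - (2*t*((j:ℝ)+m+2)*((j:ℝ)+m+3)^2)*e1
  have hQ : ((j:ℝ)+1)*((m:ℝ)+1)*B0 ≤ ((j:ℝ)+m+2)^2*((j:ℝ)+m+3)*D := by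
    have hsq : (0:ℝ) ≤ ((((j:ℝ)+m+2)*((j:ℝ)+m+3)*t - ((j:ℝ)+1)*((j:ℝ)+m+3))^2)*B0 := by
      positivity
    nlinarith [hP, hB0pos]
  have h8 : ((j:ℝ)+m+1)^2 ≤ 8*(((j:ℝ)+1)*((m:ℝ)+1)) := by nlinarith [hj4, hm2]
  have h12 : ((j:ℝ)+m+2)^2*((j:ℝ)+m+3) ≤ 12*((j:ℝ)+m+1)^3 := by nlinarith [hj0, hm0]
  have s1 : 96*((j:ℝ)+m+1)*(((j:ℝ)+1)*((m:ℝ)+1)*B0)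
      ≤ 96*((j:ℝ)+m+1)*(((j:ℝ)+m+2)^2*((j:ℝ)+m+3)*D) :=
    mul_le_mul_of_nonneg_left hQ (by positivity)
  have s2 : 12*((j:ℝ)+m+1)^3*B0 ≤ 96*((j:ℝ)+m+1)*(((j:ℝ)+1)*((m:ℝ)+1)*B0) := by
    nlinarith [mul_le_mul_of_nonneg_left h8
      (show (0:ℝ) ≤ 12*((j:ℝ)+m+1)*B0 by positivity)]
  have s3 : ((j:ℝ)+m+2)^2*((j:ℝ)+m+3)*B0 ≤ 12*((j:ℝ)+m+1)^3*B0 :=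
    mul_le_mul_of_nonneg_right h12 hB0pos.le
  have hpos : (0:ℝ) < ((j:ℝ)+m+2)^2*((j:ℝ)+m+3) := by positivity
  have hfin : (((j:ℝ)+m+2)^2*((j:ℝ)+m+3)) * B0
      ≤ (((j:ℝ)+m+2)^2*((j:ℝ)+m+3)) * (96*((j:ℝ)+m+1)*D) := by linarith [s1, s2, s3]
  exact le_of_mul_le_mul_left hfin hpos


noncomputable def momC : ℕ → ℝ
  | 0 => 1
  | 1 => 1
  | (l+2) => ((l:ℝ)+1) * momC l + ((l:ℝ)+2) * momC (l+1)

lemma momC_nonneg (k : ℕ) : 0 ≤ momC k := by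
  induction k using Nat.strong_induction_on with
  | _ k ih =>
    match k with
    | 0 => norm_num [momC]
    | 1 => norm_num [momC]
    | (l+2) =>
      have h1 := ih l (by omega)
      have h2 := ih (l+1) (by omega)
      rw [momC]
      positivity


lemma moment_bound (j m : ℕ) (t : ℝ) (h0 : 0 ≤ t) (h1 : t ≤ 1)
    (hδ : |((j:ℝ)+1) - ((j:ℝ)+m+2)*t| ≤ 1) :
    ∀ k, |mI j m k t| * ((j:ℝ)+m+1) ^ ((k+1)/2) ≤ momC k * mI j m 0 t := by
  set n : ℝ := (j:ℝ)+m+1 with hn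
  have hn1 : (1:ℝ) ≤ n := by
    rw [hn]
    nlinarith [Nat.cast_nonneg (α := ℝ) j, Nat.cast_nonneg (α := ℝ) m]
  have hn0 : (0:ℝ) < n := lt_of_lt_of_le one_pos hn1
  have hI0 : 0 < mI j m 0 t := mI_zero_pos j m t
  have key : ∀ k, |mI j m k t| * n ^ ((k+1)/2) ≤ momC k * mI j m 0 t
      ∧ |mI j m (k+1) t| * n ^ ((k+2)/2) ≤ momC (k+1) * mI j m 0 t := by
    intro k
    induction k with
    | zero =>
      constructor
      · simp only [Nat.zero_add, Nat.div_self, pow_zero, mul_one]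
        rw [abs_of_pos hI0, momC]
        simp
      · have hs := stein1 j m t
        have e1 : |mI j m 1 t| * (n+1) = |((j:ℝ) + m + 2) * mI j m 1 t| := by
          rw [abs_mul, abs_of_pos (show (0:ℝ) < (j:ℝ)+m+2 by positivity), hn]
          ring
        have h2 : |mI j m 1 t| * (n+1) ≤ 1 * mI j m 0 t := by
          rw [e1, hs, abs_mul, abs_of_pos hI0]
          exact mul_le_mul_of_nonneg_right hδ (le_of_lt hI0)
        have h3 : |mI j m 1 t| * n ≤ |mI j m 1 t| * (n+1) := by
          nlinarith [abs_nonneg (mI j m 1 t)]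
        simp only [momC]
        calc |mI j m 1 t| * n ^ ((1+1)/2) = |mI j m 1 t| * n := by norm_num
          _ ≤ 1 * mI j m 0 t := le_trans h3 h2
    | succ l ih =>
      obtain ⟨ihl, ihl1⟩ := ih
      refine ⟨ihl1, ?_⟩
      have hs := stein2 j m l t
      have hl0 : (0:ℝ) ≤ (l:ℝ) := Nat.cast_nonneg l
      have hl1 : (0:ℝ) < (l:ℝ)+1 := by positivity
      have habs : |mI j m (l+2) t| * (n + 2 + l)
          ≤ ((l:ℝ)+1) * |mI j m l t| + ((l:ℝ)+2) * |mI j m (l+1) t| := by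
        have e1 : |mI j m (l+2) t| * (n+2+l) = |((j:ℝ) + m + 3 + l) * mI j m (l+2) t| := by
          rw [abs_mul, abs_of_pos (show (0:ℝ) < (j:ℝ)+m+3+l by positivity), hn]
          ring
        have hA : |((l:ℝ)+1) * (t*(1-t)) * mI j m l t| ≤ ((l:ℝ)+1) * |mI j m l t| := by
          rw [abs_mul, abs_mul, abs_of_pos hl1]
          have htt : |t * (1-t)| ≤ 1 := by
            rw [abs_of_nonneg (by nlinarith)]
            nlinarith
          calc ((l:ℝ)+1) * |t*(1-t)| * |mI j m l t|
              ≤ ((l:ℝ)+1) * 1 * |mI j m l t| :=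
                mul_le_mul_of_nonneg_right
                  (mul_le_mul_of_nonneg_left htt hl1.le) (abs_nonneg _)
            _ = ((l:ℝ)+1) * |mI j m l t| := by ring
        have hB : |((((j:ℝ)+1) - ((j:ℝ)+m+2)*t) + ((l:ℝ)+1)*(1-2*t)) * mI j m (l+1) t|
            ≤ ((l:ℝ)+2) * |mI j m (l+1) t| := by
          rw [abs_mul]
          apply mul_le_mul_of_nonneg_right _ (abs_nonneg _)
          have hc : |((l:ℝ)+1)*(1-2*t)| ≤ ((l:ℝ)+1) := by
            rw [abs_mul, abs_of_pos hl1]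
            have : |1 - 2*t| ≤ 1 := by
              rw [abs_le]; constructor <;> linarith
            nlinarith
          calc |(((j:ℝ)+1) - ((j:ℝ)+m+2)*t) + ((l:ℝ)+1)*(1-2*t)|
              ≤ |((j:ℝ)+1) - ((j:ℝ)+m+2)*t| + |((l:ℝ)+1)*(1-2*t)| := abs_add_le _ _
            _ ≤ 1 + ((l:ℝ)+1) := by linarith
            _ = (l:ℝ)+2 := by ring
        rw [e1, hs]
        calc |((l:ℝ)+1) * (t*(1-t)) * mI j m l t
              + ((((j:ℝ)+1) - ((j:ℝ)+m+2)*t) + ((l:ℝ)+1)*(1-2*t)) * mI j m (l+1) t|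
            ≤ |((l:ℝ)+1) * (t*(1-t)) * mI j m l t|
              + |((((j:ℝ)+1) - ((j:ℝ)+m+2)*t) + ((l:ℝ)+1)*(1-2*t)) * mI j m (l+1) t| :=
              abs_add_le _ _
          _ ≤ ((l:ℝ)+1) * |mI j m l t| + ((l:ℝ)+2) * |mI j m (l+1) t| := add_le_add hA hB
      have hNl : (l+2+1)/2 = (l+1)/2 + 1 := by omega
      have hmono : |mI j m (l+1) t| * n ^ ((l+1)/2) ≤ momC (l+1) * mI j m 0 t := by
        refine le_trans ?_ ihl1
        exact mul_le_mul_of_nonneg_left (pow_le_pow_right₀ hn1 (by omega)) (abs_nonneg _)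
      have step : |mI j m (l+2) t| * n ^ ((l+2+1)/2)
          ≤ (((l:ℝ)+1) * |mI j m l t| + ((l:ℝ)+2) * |mI j m (l+1) t|) * n ^ ((l+1)/2) := by
        rw [hNl, pow_succ]
        have h2 : |mI j m (l+2) t| * n ≤ |mI j m (l+2) t| * (n + 2 + l) := by
          apply mul_le_mul_of_nonneg_left _ (abs_nonneg _)
          linarith
        calc |mI j m (l+2) t| * (n ^ ((l+1)/2) * n)
            = (|mI j m (l+2) t| * n) * n ^ ((l+1)/2) := by ring
          _ ≤ (|mI j m (l+2) t| * (n+2+l)) * n ^ ((l+1)/2) :=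
              mul_le_mul_of_nonneg_right h2 (pow_nonneg hn0.le _)
          _ ≤ (((l:ℝ)+1) * |mI j m l t| + ((l:ℝ)+2) * |mI j m (l+1) t|) * n ^ ((l+1)/2) :=
              mul_le_mul_of_nonneg_right habs (pow_nonneg hn0.le _)
      calc |mI j m (l+2) t| * n ^ ((l+2+1)/2)
          ≤ (((l:ℝ)+1) * |mI j m l t| + ((l:ℝ)+2) * |mI j m (l+1) t|) * n ^ ((l+1)/2) := step
        _ = ((l:ℝ)+1) * (|mI j m l t| * n ^ ((l+1)/2))
            + ((l:ℝ)+2) * (|mI j m (l+1) t| * n ^ ((l+1)/2)) := by ring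
        _ ≤ ((l:ℝ)+1) * (momC l * mI j m 0 t) + ((l:ℝ)+2) * (momC (l+1) * mI j m 0 t) :=
            add_le_add (mul_le_mul_of_nonneg_left ihl (by positivity))
              (mul_le_mul_of_nonneg_left hmono (by positivity))
        _ = momC (l+2) * mI j m 0 t := by rw [momC]; ring
  exact fun k => (key k).1


lemma holder01 (u v : ℝ → ℝ) (hu : Continuous u) (hv : Continuous v)
    (hu0 : ∀ x ∈ Set.Icc (0:ℝ) 1, u x ∈ Set.Icc (0:ℝ) 1)
    (hv0 : ∀ x ∈ Set.Icc (0:ℝ) 1, v x ∈ Set.Icc (0:ℝ) 1)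
    {p q : ℝ} (hpq : Real.HolderConjugate p q) :
    ∫ x in (0:ℝ)..1, (u x) ^ (1/p) * (v x) ^ (1/q)
      ≤ (∫ x in (0:ℝ)..1, u x) ^ (1/p) * (∫ x in (0:ℝ)..1, v x) ^ (1/q) := by
  set μ : Measure ℝ := volume.restrict (Set.Ioc (0:ℝ) 1) with hμ
  haveI : IsFiniteMeasure μ := by
    constructor
    rw [hμ, Measure.restrict_apply_univ, Real.volume_Ioc]
    norm_num
  have hmem : ∀ᵐ x ∂μ, x ∈ Set.Icc (0:ℝ) 1 := by
    have := ae_restrict_mem (μ := volume) (s := Set.Ioc (0:ℝ) 1) measurableSet_Ioc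
    rw [← hμ] at this
    filter_upwards [this] with x hx
    exact ⟨le_of_lt hx.1, hx.2⟩
  have hf_meas : AEStronglyMeasurable (fun x => (u x) ^ (1/p)) μ :=
    ((Real.continuous_rpow_const (one_div_pos.mpr hpq.pos).le).comp hu).aestronglyMeasurable
  have hg_meas : AEStronglyMeasurable (fun x => (v x) ^ (1/q)) μ :=
    ((Real.continuous_rpow_const (one_div_pos.mpr hpq.symm.pos).le).comp hv).aestronglyMeasurable
  have hf_nonneg : 0 ≤ᵐ[μ] (fun x => (u x) ^ (1/p)) := by
    filter_upwards [hmem] with x hx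
    exact Real.rpow_nonneg (hu0 x hx).1 _
  have hg_nonneg : 0 ≤ᵐ[μ] (fun x => (v x) ^ (1/q)) := by
    filter_upwards [hmem] with x hx
    exact Real.rpow_nonneg (hv0 x hx).1 _
  have hf_mem : MemLp (fun x => (u x) ^ (1/p)) (ENNReal.ofReal p) μ := by
    apply MemLp.of_bound hf_meas 1
    filter_upwards [hmem] with x hx
    rw [Real.norm_eq_abs, abs_of_nonneg (Real.rpow_nonneg (hu0 x hx).1 _)]
    exact Real.rpow_le_one (hu0 x hx).1 (hu0 x hx).2 (one_div_pos.mpr hpq.pos).le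
  have hg_mem : MemLp (fun x => (v x) ^ (1/q)) (ENNReal.ofReal q) μ := by
    apply MemLp.of_bound hg_meas 1
    filter_upwards [hmem] with x hx
    rw [Real.norm_eq_abs, abs_of_nonneg (Real.rpow_nonneg (hv0 x hx).1 _)]
    exact Real.rpow_le_one (hv0 x hx).1 (hv0 x hx).2 (one_div_pos.mpr hpq.symm.pos).le
  have H := MeasureTheory.integral_mul_le_Lp_mul_Lq_of_nonneg hpq hf_nonneg hg_nonneg hf_mem hg_mem
  have hup : (∫ x, ((u x) ^ (1/p)) ^ p ∂μ) = ∫ x, u x ∂μ := by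
    apply MeasureTheory.integral_congr_ae
    filter_upwards [hmem] with x hx
    rw [← Real.rpow_mul (hu0 x hx).1, one_div, inv_mul_cancel₀ hpq.pos.ne', Real.rpow_one]
  have hvq : (∫ x, ((v x) ^ (1/q)) ^ q ∂μ) = ∫ x, v x ∂μ := by
    apply MeasureTheory.integral_congr_ae
    filter_upwards [hmem] with x hx
    rw [← Real.rpow_mul (hv0 x hx).1, one_div, inv_mul_cancel₀ hpq.symm.pos.ne', Real.rpow_one]
  rw [hup, hvq] at H
  rw [intervalIntegral.integral_of_le zero_le_one, intervalIntegral.integral_of_le zero_le_one,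
    intervalIntegral.integral_of_le zero_le_one]
  exact H


lemma K_mem (j m : ℕ) (t : ℝ) (h0 : 0 ≤ t) (h1 : t ≤ 1) :
    ∀ x ∈ Set.Icc (0:ℝ) 1, ∀ k : ℕ, |x - t| ^ k * (x ^ j * (1 - x) ^ m) ∈ Set.Icc (0:ℝ) 1 := by
  rintro x ⟨hx0, hx1⟩ k
  have h2 : |x - t| ≤ 1 := by rw [abs_le]; constructor <;> linarith
  have h3 : (0:ℝ) ≤ |x - t| := abs_nonneg _
  have h8 : (0:ℝ) ≤ 1 - x := by linarith
  have h4 : (0:ℝ) ≤ x ^ j := by positivity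
  have h5 : x ^ j ≤ 1 := pow_le_one₀ hx0 hx1
  have h6 : (0:ℝ) ≤ (1-x) ^ m := by positivity
  have h7 : (1-x) ^ m ≤ 1 := pow_le_one₀ h8 (by linarith)
  have hA : |x - t| ^ k ≤ 1 := pow_le_one₀ (n := k) h3 h2
  have hA0 : (0:ℝ) ≤ |x - t| ^ k := pow_nonneg h3 k
  have hBC : x ^ j * (1-x) ^ m ≤ 1 := by nlinarith
  have hBC0 : (0:ℝ) ≤ x ^ j * (1-x) ^ m := mul_nonneg h4 h6
  exact ⟨mul_nonneg hA0 hBC0, by simpa using mul_le_mul hA hBC hBC0 zero_le_one⟩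

lemma rpow_helper1 (A K : ℝ) (hA : 0 ≤ A) (hK : 0 ≤ K) :
    (A ^ 1 * K) ^ ((2:ℝ)/3) * ((A ^ 4) * K) ^ ((1:ℝ)/3) = A ^ 2 * K := by
  rcases hA.eq_or_lt with h | hApos
  · rw [← h]
    simp [Real.zero_rpow, show ((2:ℝ)/3) ≠ 0 from by norm_num,
      show ((1:ℝ)/3) ≠ 0 from by norm_num]
  rcases hK.eq_or_lt with h | hKpos
  · rw [← h]
    simp [Real.zero_rpow, show ((2:ℝ)/3) ≠ 0 from by norm_num,
      show ((1:ℝ)/3) ≠ 0 from by norm_num]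
  have h1 : (0:ℝ) < A ^ 1 * K := by positivity
  have h2 : (0:ℝ) < A ^ 4 * K := by positivity
  have hL : (0:ℝ) < (A ^ 1 * K) ^ ((2:ℝ)/3) * ((A ^ 4) * K) ^ ((1:ℝ)/3) := by
    have := Real.rpow_pos_of_pos h1 ((2:ℝ)/3)
    have := Real.rpow_pos_of_pos h2 ((1:ℝ)/3)
    positivity
  have hR : (0:ℝ) < A ^ 2 * K := by positivity
  rw [← Real.exp_log hL, ← Real.exp_log hR]
  congr 1
  rw [Real.log_mul (Real.rpow_pos_of_pos h1 _).ne' (Real.rpow_pos_of_pos h2 _).ne',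
    Real.log_rpow h1, Real.log_rpow h2,
    Real.log_mul (pow_pos hApos 1).ne' hKpos.ne',
    Real.log_mul (pow_pos hApos 4).ne' hKpos.ne',
    Real.log_mul (pow_pos hApos 2).ne' hKpos.ne',
    Real.log_pow, Real.log_pow, Real.log_pow]
  push_cast
  ring

lemma rpow_helper2 (A K : ℝ) (a : ℕ) (ha : 0 < a) (hA : 0 ≤ A) (hK : 0 ≤ K) :
    ((A ^ a) * K) ^ (1/(a:ℝ)) * K ^ (1 - 1/(a:ℝ)) = A * K := by
  have haR : (0:ℝ) < (a:ℝ) := by exact_mod_cast ha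
  rcases hA.eq_or_lt with h | hApos
  · rw [← h]
    have hz : (1/(a:ℝ)) ≠ 0 := by positivity
    simp only [zero_pow ha.ne', zero_mul, Real.zero_rpow hz]
  rcases hK.eq_or_lt with h | hKpos
  · rw [← h, mul_zero, Real.zero_rpow (by positivity), zero_mul, mul_zero]
  have h1 : (0:ℝ) < A ^ a * K := by positivity
  have hL : (0:ℝ) < (A ^ a * K) ^ (1/(a:ℝ)) * K ^ (1 - 1/(a:ℝ)) := by
    have := Real.rpow_pos_of_pos h1 (1/(a:ℝ))
    have := Real.rpow_pos_of_pos hKpos (1 - 1/(a:ℝ))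
    positivity
  have hR : (0:ℝ) < A * K := by positivity
  rw [← Real.exp_log hL, ← Real.exp_log hR]
  congr 1
  rw [Real.log_mul (Real.rpow_pos_of_pos h1 _).ne' (Real.rpow_pos_of_pos hKpos _).ne',
    Real.log_rpow h1, Real.log_rpow hKpos,
    Real.log_mul (pow_pos hApos a).ne' hKpos.ne',
    Real.log_mul hApos.ne' hKpos.ne', Real.log_pow]
  field_simp
  ring

lemma holderA (j m : ℕ) (t : ℝ) (h0 : 0 ≤ t) (h1 : t ≤ 1) :
    mI j m 2 t ≤ (aI j m 1 t) ^ ((2:ℝ)/3) * (mI j m 4 t) ^ ((1:ℝ)/3) := by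
  have hpq : Real.HolderConjugate (3/2) 3 :=
    (Real.holderConjugate_iff_eq_conjExponent (by norm_num)).mpr (by norm_num)
  have hKm := K_mem j m t h0 h1
  have hu : Continuous (fun x : ℝ => |x - t| ^ 1 * (x ^ j * (1 - x) ^ m)) := by continuity
  have hv : Continuous (fun x : ℝ => (x - t) ^ 4 * (x ^ j * (1 - x) ^ m)) := by continuity
  have hv' : ∀ x : ℝ, (x - t) ^ 4 * (x ^ j * (1 - x) ^ m)
      = |x - t| ^ 4 * (x ^ j * (1 - x) ^ m) := by
    intro x
    rw [← abs_pow, abs_of_nonneg (by positivity)]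
  have H := holder01 (fun x => |x - t| ^ 1 * (x ^ j * (1 - x) ^ m))
    (fun x => (x - t) ^ 4 * (x ^ j * (1 - x) ^ m)) hu hv
    (fun x hx => hKm x hx 1)
    (fun x hx => by
      show (x - t) ^ 4 * (x ^ j * (1 - x) ^ m) ∈ Set.Icc (0:ℝ) 1
      rw [hv' x]; exact hKm x hx 4) hpq
  have hL : (∫ x in (0:ℝ)..1, (|x - t| ^ 1 * (x ^ j * (1 - x) ^ m)) ^ (1/(3/2:ℝ))
      * (((x - t) ^ 4 * (x ^ j * (1 - x) ^ m))) ^ (1/(3:ℝ)))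
      = mI j m 2 t := by
    rw [mI]
    apply intervalIntegral.integral_congr
    intro x hx
    rw [Set.uIcc_of_le zero_le_one] at hx
    obtain ⟨hx0, hx1⟩ := hx
    have hKnn : (0:ℝ) ≤ x ^ j * (1 - x) ^ m := by
      have : (0:ℝ) ≤ 1 - x := by linarith
      positivity
    show (|x - t| ^ 1 * (x ^ j * (1 - x) ^ m)) ^ (1/(3/2:ℝ))
      * (((x - t) ^ 4 * (x ^ j * (1 - x) ^ m))) ^ (1/(3:ℝ)) = (x - t) ^ 2 * (x ^ j * (1 - x) ^ m)
    rw [hv' x, show (1:ℝ)/(3/2) = 2/3 from by norm_num, show (1:ℝ)/3 = ((1:ℝ)/3) from rfl,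
      rpow_helper1 (|x-t|) _ (abs_nonneg _) hKnn, ← sq_abs (x - t)]
  rw [hL] at H
  refine le_trans H (le_of_eq ?_)
  rw [show (1:ℝ)/(3/2) = 2/3 from by norm_num, aI, mI]

lemma holderB (j m a : ℕ) (t : ℝ) (h0 : 0 ≤ t) (h1 : t ≤ 1) (ha : 0 < a) :
    aI j m 1 t ≤ (aI j m a t) ^ (1/(a:ℝ)) * (∫ x in (0:ℝ)..1, x ^ j * (1-x) ^ m) ^ (1 - 1/(a:ℝ)) := by
  rcases eq_or_lt_of_le (Nat.one_le_iff_ne_zero.mpr ha.ne' : 1 ≤ a) with heq | hlt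
  · rw [← heq]
    norm_num
  · have ha1 : (1:ℝ) < (a:ℝ) := by exact_mod_cast hlt
    have hpq : Real.HolderConjugate (a:ℝ) ((a:ℝ)/((a:ℝ)-1)) :=
      Real.HolderConjugate.conjExponent ha1
    have hKm := K_mem j m t h0 h1
    have hu : Continuous (fun x : ℝ => |x - t| ^ a * (x ^ j * (1 - x) ^ m)) := by continuity
    have hv : Continuous (fun x : ℝ => |x - t| ^ 0 * (x ^ j * (1 - x) ^ m)) := by continuity
    have H := holder01 _ _ hu hv (fun x hx => hKm x hx a) (fun x hx => hKm x hx 0) hpq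
    have h1q : 1/((a:ℝ)/((a:ℝ)-1)) = 1 - 1/(a:ℝ) := by
      field_simp
    rw [h1q] at H
    have hL : (∫ x in (0:ℝ)..1, (|x - t| ^ a * (x ^ j * (1 - x) ^ m)) ^ (1/(a:ℝ))
        * ((|x - t| ^ 0 * (x ^ j * (1 - x) ^ m))) ^ (1 - 1/(a:ℝ)))
        = aI j m 1 t := by
      rw [aI]
      apply intervalIntegral.integral_congr
      intro x hx
      rw [Set.uIcc_of_le zero_le_one] at hx
      obtain ⟨hx0, hx1⟩ := hx
      have hKnn : (0:ℝ) ≤ x ^ j * (1 - x) ^ m := by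
        have : (0:ℝ) ≤ 1 - x := by linarith
        positivity
      show (|x - t| ^ a * (x ^ j * (1 - x) ^ m)) ^ (1/(a:ℝ))
        * ((|x - t| ^ 0 * (x ^ j * (1 - x) ^ m))) ^ (1 - 1/(a:ℝ))
        = |x - t| ^ 1 * (x ^ j * (1 - x) ^ m)
      rw [pow_zero, one_mul, pow_one,
        rpow_helper2 (|x-t|) _ a ha (abs_nonneg _) hKnn]
    have e3 : (∫ x in (0:ℝ)..1, |x - t| ^ 0 * (x ^ j * (1 - x) ^ m))
        = ∫ x in (0:ℝ)..1, x ^ j * (1-x) ^ m := by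
      apply intervalIntegral.integral_congr
      intro x _
      simp
    rw [hL, e3] at H
    exact H


lemma momC2 : momC 2 = 3 := by
  show momC (0+2) = 3
  rw [momC]
  norm_num [momC]

lemma momC3 : momC 3 = 11 := by
  show momC (1+2) = 11
  rw [momC, momC2]
  norm_num [momC]

lemma momC4 : momC 4 = 53 := by
  show momC (2+2) = 53
  rw [momC, momC2, momC3]
  norm_num

lemma rpow_cancel {X Y θ : ℝ} (hX : 0 ≤ X) (hY : 0 ≤ Y) (hθ : 0 < θ)
    (h : X ^ θ ≤ Y ^ θ) : X ≤ Y := by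
  have h2 := Real.rpow_le_rpow (Real.rpow_nonneg hX θ) h (le_of_lt (inv_pos.mpr hθ))
  rwa [← Real.rpow_mul hX, ← Real.rpow_mul hY, mul_inv_cancel₀ hθ.ne', Real.rpow_one,
    Real.rpow_one] at h2

lemma eq_of_log {x y : ℝ} (hx : 0 < x) (hy : 0 < y) (h : Real.log x = Real.log y) : x = y := by
  rw [← Real.exp_log hx, ← Real.exp_log hy, h]

lemma term_lower (j m a : ℕ) (ha : 0 < a) (t : ℝ) (h0 : 0 ≤ t) (h1 : t ≤ 1)
    (hδ : |((j:ℝ)+1) - ((j:ℝ)+m+2)*t| ≤ 1)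
    (hj4 : ((j:ℝ)+m+1) ≤ 4*((j:ℝ)+1)) (hm2 : ((j:ℝ)+m+1) ≤ 2*((m:ℝ)+1)) :
    (96^3*53:ℝ) ^ (-(a:ℝ)/2) * ((j:ℝ)+m+1) ^ (-(a:ℝ)/2)
      ≤ ((j:ℝ)+1) * (((j+m+1).choose (j+1) : ℕ) : ℝ) * aI j m a t := by
  have hj0 : (0:ℝ) ≤ (j:ℝ) := Nat.cast_nonneg j
  have hm0 : (0:ℝ) ≤ (m:ℝ) := Nat.cast_nonneg m
  have haR : (0:ℝ) < (a:ℝ) := by exact_mod_cast ha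
  set n : ℝ := (j:ℝ)+m+1 with hn
  have hn1 : (1:ℝ) ≤ n := by rw [hn]; linarith
  have hn0 : (0:ℝ) < n := lt_of_lt_of_le one_pos hn1
  set B0 : ℝ := ∫ x in (0:ℝ)..1, x ^ j * (1 - x) ^ m with hB0
  have hB0pos : 0 < B0 := Bint_pos j m
  set c : ℝ := ((j:ℝ)+1) * (((j+m+1).choose (j+1) : ℕ) : ℝ) with hc
  have hcpos : 0 < c := by
    rw [hc]
    have : (0:ℝ) < (((j+m+1).choose (j+1) : ℕ) : ℝ) := by
      have := Nat.choose_pos (show j+1 ≤ j+m+1 by omega)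
      exact_mod_cast this
    positivity
  have hnorm : c * B0 = 1 := norm_eq j m
  set v : ℝ := (96*n)⁻¹ with hv
  set w : ℝ := 53/n^2 with hw
  have hvpos : 0 < v := by rw [hv]; positivity
  have hwpos : 0 < w := by rw [hw]; positivity
  -- variance lower bound
  have hvar : v * B0 ≤ mI j m 2 t := by
    have := var_lb j m t hj4 hm2
    rw [mI_zero_eq, ← hB0, ← hn] at this
    rw [hv, inv_mul_le_iff₀ (by positivity)]
    linarith [this]
  -- fourth moment
  have hmom4 := moment_bound j m t h0 h1 hδ 4
  rw [show (4+1)/2 = 2 by norm_num, ← hn, mI_zero_eq, ← hB0] at hmom4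
  have hmI4nn : 0 ≤ mI j m 4 t := by
    rw [show (4:ℕ) = 2*2 from rfl, mI_even_eq]
    exact aI_nonneg j m (2*2) t
  have hmom4' : mI j m 4 t ≤ w * B0 := by
    have h53 : momC 4 = 53 := momC4
    rw [abs_of_nonneg hmI4nn] at hmom4
    rw [hw, div_mul_eq_mul_div, le_div_iff₀ (by positivity : (0:ℝ) < n^2)]
    calc mI j m 4 t * n^2 ≤ momC 4 * B0 := hmom4
      _ = 53 * B0 := by rw [h53]
  -- Hölder chain
  have hA := holderA j m t h0 h1
  have hB := holderB j m a t h0 h1 ha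
  rw [← hB0] at hB
  set X : ℝ := aI j m a t with hX
  have hXnn : 0 ≤ X := aI_nonneg j m a t
  have hchain : v * B0 ≤ (X ^ (1/(a:ℝ)) * B0 ^ (1 - 1/(a:ℝ))) ^ ((2:ℝ)/3) * (w*B0) ^ ((1:ℝ)/3) := by
    refine le_trans (le_trans hvar hA) ?_
    have t1 : (aI j m 1 t) ^ ((2:ℝ)/3) ≤ (X ^ (1/(a:ℝ)) * B0 ^ (1 - 1/(a:ℝ))) ^ ((2:ℝ)/3) :=
      Real.rpow_le_rpow (aI_nonneg j m 1 t) hB (by norm_num)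
    have t2 : (mI j m 4 t) ^ ((1:ℝ)/3) ≤ (w*B0) ^ ((1:ℝ)/3) :=
      Real.rpow_le_rpow hmI4nn hmom4' (by norm_num)
    exact mul_le_mul t1 t2 (Real.rpow_nonneg hmI4nn _)
      (Real.rpow_nonneg (mul_nonneg (Real.rpow_nonneg hXnn _) (Real.rpow_nonneg hB0pos.le _)) _)
  -- X must be positive
  have hXpos : 0 < X := by
    rcases hXnn.eq_or_lt with hz | hp
    · exfalso
      rw [← hz, Real.zero_rpow (by positivity : (1/(a:ℝ)) ≠ 0), zero_mul,
        Real.zero_rpow (by norm_num : ((2:ℝ)/3) ≠ 0), zero_mul] at hchain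
      nlinarith [mul_pos hvpos hB0pos]
    · exact hp
  -- set up the two equalities by logs
  set θ : ℝ := 2/(3*(a:ℝ)) with hθ
  have hθpos : 0 < θ := by rw [hθ]; positivity
  set R : ℝ := B0 ^ ((2:ℝ)/3 - θ) * (w*B0) ^ ((1:ℝ)/3) with hR
  have hRpos : 0 < R := by
    rw [hR]
    have := Real.rpow_pos_of_pos hB0pos ((2:ℝ)/3 - θ)
    have := Real.rpow_pos_of_pos (mul_pos hwpos hB0pos) ((1:ℝ)/3)
    positivity
  have hE1 : (X ^ (1/(a:ℝ)) * B0 ^ (1 - 1/(a:ℝ))) ^ ((2:ℝ)/3) * (w*B0) ^ ((1:ℝ)/3)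
      = X ^ θ * R := by
    apply eq_of_log
    · have := Real.rpow_pos_of_pos (mul_pos (Real.rpow_pos_of_pos hXpos (1/(a:ℝ)))
        (Real.rpow_pos_of_pos hB0pos (1 - 1/(a:ℝ)))) ((2:ℝ)/3)
      have := Real.rpow_pos_of_pos (mul_pos hwpos hB0pos) ((1:ℝ)/3)
      positivity
    · have := Real.rpow_pos_of_pos hXpos θ
      positivity
    · rw [Real.log_mul (Real.rpow_pos_of_pos (mul_pos (Real.rpow_pos_of_pos hXpos _)
          (Real.rpow_pos_of_pos hB0pos _)) _).ne' (Real.rpow_pos_of_pos (mul_pos hwpos hB0pos) _).ne',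
        Real.log_rpow (mul_pos (Real.rpow_pos_of_pos hXpos _) (Real.rpow_pos_of_pos hB0pos _)),
        Real.log_mul (Real.rpow_pos_of_pos hXpos _).ne' (Real.rpow_pos_of_pos hB0pos _).ne',
        Real.log_rpow hXpos, Real.log_rpow hB0pos,
        Real.log_mul (Real.rpow_pos_of_pos hXpos θ).ne' hRpos.ne',
        Real.log_rpow hXpos, hR,
        Real.log_mul (Real.rpow_pos_of_pos hB0pos _).ne'
          (Real.rpow_pos_of_pos (mul_pos hwpos hB0pos) _).ne',
        Real.log_rpow hB0pos, hθ]
      field_simp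
      ring
  set q : ℝ := v^3/w with hq
  have hqpos : 0 < q := by rw [hq]; positivity
  have hE2 : (q ^ ((a:ℝ)/2) * B0) ^ θ * R = v * B0 := by
    apply eq_of_log
    · have h1 := Real.rpow_pos_of_pos (mul_pos (Real.rpow_pos_of_pos hqpos ((a:ℝ)/2)) hB0pos) θ
      positivity
    · positivity
    · rw [Real.log_mul (Real.rpow_pos_of_pos (mul_pos (Real.rpow_pos_of_pos hqpos _) hB0pos) θ).ne'
          hRpos.ne',
        Real.log_rpow (mul_pos (Real.rpow_pos_of_pos hqpos _) hB0pos),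
        Real.log_mul (Real.rpow_pos_of_pos hqpos _).ne' hB0pos.ne',
        Real.log_rpow hqpos, hR,
        Real.log_mul (Real.rpow_pos_of_pos hB0pos _).ne'
          (Real.rpow_pos_of_pos (mul_pos hwpos hB0pos) _).ne',
        Real.log_rpow hB0pos,
        Real.log_rpow (mul_pos hwpos hB0pos),
        Real.log_mul hwpos.ne' hB0pos.ne',
        Real.log_mul hvpos.ne' hB0pos.ne',
        hq, Real.log_div (by positivity) hwpos.ne', Real.log_pow, hθ]
      field_simp
      ring
  -- conclude q^{a/2} B0 ≤ X
  have hkey : q ^ ((a:ℝ)/2) * B0 ≤ X := by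
    apply rpow_cancel (by positivity) hXnn hθpos
    have hQθR : (q ^ ((a:ℝ)/2) * B0) ^ θ * R ≤ X ^ θ * R := by
      rw [hE2, ← hE1]
      exact hchain
    exact le_of_mul_le_mul_right hQθR hRpos
  -- multiply by c
  have hfin : q ^ ((a:ℝ)/2) ≤ c * X := by
    calc q ^ ((a:ℝ)/2) = q ^ ((a:ℝ)/2) * (c * B0) := by rw [hnorm, mul_one]
      _ = c * (q ^ ((a:ℝ)/2) * B0) := by ring
      _ ≤ c * X := mul_le_mul_of_nonneg_left hkey hcpos.le
  -- rewrite q^{a/2}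
  have hqval : q = ((96:ℝ)^3*53*n)⁻¹ := by
    rw [hq, hv, hw]
    field_simp
  have hqrw : q ^ ((a:ℝ)/2) = (96^3*53:ℝ) ^ (-(a:ℝ)/2) * n ^ (-(a:ℝ)/2) := by
    have hC : (0:ℝ) < 96^3*53 := by norm_num
    rw [hqval, Real.inv_rpow (by positivity), ← Real.rpow_neg (by positivity),
      show -((a:ℝ)/2) = -(a:ℝ)/2 from by ring, Real.mul_rpow hC.le hn0.le]
  rw [← hqrw]
  exact hfin


lemma term_upper (j m a : ℕ) (ha : 0 < a) (t : ℝ) (h0 : 0 ≤ t) (h1 : t ≤ 1)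
    (hδ : |((j:ℝ)+1) - ((j:ℝ)+m+2)*t| ≤ 1) :
    ((j:ℝ)+1) * (((j+m+1).choose (j+1) : ℕ) : ℝ) * aI j m a t
      ≤ (1 + momC (2*a))/2 * ((j:ℝ)+m+1) ^ (-(a:ℝ)/2) := by
  have hj0 : (0:ℝ) ≤ (j:ℝ) := Nat.cast_nonneg j
  have hm0 : (0:ℝ) ≤ (m:ℝ) := Nat.cast_nonneg m
  set n : ℝ := (j:ℝ)+m+1 with hn
  have hn1 : (1:ℝ) ≤ n := by rw [hn]; linarith
  have hn0 : (0:ℝ) < n := lt_of_lt_of_le one_pos hn1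
  set S : ℝ := n ^ (-(a:ℝ)/2) with hS
  have hSpos : 0 < S := Real.rpow_pos_of_pos hn0 _
  set c : ℝ := ((j:ℝ)+1) * (((j+m+1).choose (j+1) : ℕ) : ℝ) with hc
  have hcpos : 0 < c := by
    rw [hc]
    have : (0:ℝ) < (((j+m+1).choose (j+1) : ℕ) : ℝ) := by
      have := Nat.choose_pos (show j+1 ≤ j+m+1 by omega)
      exact_mod_cast this
    positivity
  have hnorm : c * mI j m 0 t = 1 := by rw [hc, mI_zero_eq]; exact norm_eq j m
  -- pointwise AM-GM then integrate
  have hptwise : aI j m a t ≤ (S/2) * mI j m 0 t + (1/(2*S)) * mI j m (2*a) t := by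
    have heq : (S/2) * mI j m 0 t + (1/(2*S)) * mI j m (2*a) t
        = ∫ x in (0:ℝ)..1, ((S/2) * ((x-t)^0 * (x ^ j * (1 - x) ^ m))
            + (1/(2*S)) * ((x-t)^(2*a) * (x ^ j * (1 - x) ^ m))) := by
      rw [intervalIntegral.integral_add
        ((Continuous.intervalIntegrable (by fun_prop) 0 1).const_mul (S/2))
        ((Continuous.intervalIntegrable (by fun_prop) 0 1).const_mul (1/(2*S))),
        intervalIntegral.integral_const_mul, intervalIntegral.integral_const_mul, mI, mI]
    rw [heq, aI]
    apply intervalIntegral.integral_mono_on zero_le_one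
      (Continuous.intervalIntegrable (by fun_prop) 0 1)
      (Continuous.intervalIntegrable (by fun_prop) 0 1)
    intro x hx
    have hxK : (0:ℝ) ≤ x ^ j * (1 - x) ^ m := by
      have h1x : (0:ℝ) ≤ 1 - x := by linarith [hx.2]
      have h0x : (0:ℝ) ≤ x := hx.1
      positivity
    have hv0 : (0:ℝ) ≤ |x - t| ^ a := by positivity
    have h2a : (x-t)^(2*a) = (|x-t|^a)^2 := by
      calc (x-t)^(2*a) = ((x-t)^2)^a := by rw [pow_mul]
        _ = (|x-t|^2)^a := by rw [sq_abs]
        _ = (|x-t|^a)^2 := by rw [← pow_mul, mul_comm 2 a, pow_mul]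
    have hamgm : |x-t|^a ≤ S/2 + (1/(2*S)) * (x-t)^(2*a) := by
      rw [h2a, show S/2 + (1/(2*S))*(|x-t|^a)^2 = (S^2 + (|x-t|^a)^2)/(2*S) from by
        field_simp]
      rw [le_div_iff₀ (by positivity : (0:ℝ) < 2*S)]
      nlinarith [sq_nonneg (|x-t|^a - S)]
    calc |x-t|^a * (x ^ j * (1 - x) ^ m)
        ≤ (S/2 + (1/(2*S)) * (x-t)^(2*a)) * (x ^ j * (1 - x) ^ m) :=
          mul_le_mul_of_nonneg_right hamgm hxK
      _ = (S/2) * ((x-t)^0 * (x ^ j * (1 - x) ^ m))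
          + (1/(2*S)) * ((x-t)^(2*a) * (x ^ j * (1 - x) ^ m)) := by
          rw [pow_zero]; ring
  -- moment bound for 2a
  have hmom := moment_bound j m t h0 h1 hδ (2*a)
  rw [show (2*a+1)/2 = a by omega] at hmom
  have hm2a : mI j m (2*a) t * n ^ a ≤ momC (2*a) * mI j m 0 t :=
    le_trans (mul_le_mul_of_nonneg_right (le_abs_self _) (by positivity)) hmom
  have hSS : S * S * (n:ℝ) ^ (a:ℕ) = 1 := by
    rw [hS, ← Real.rpow_natCast n a, ← Real.rpow_add hn0, ← Real.rpow_add hn0]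
    rw [show -(a:ℝ)/2 + -(a:ℝ)/2 + (a:ℝ) = 0 by ring, Real.rpow_zero]
  have hI0pos := mI_zero_pos j m t
  have hna : (0:ℝ) < n ^ (a:ℕ) := by positivity
  have step : c * aI j m a t ≤ (S/2) * (c * mI j m 0 t) + (1/(2*S)) * (c * mI j m (2*a) t) := by
    nlinarith [mul_le_mul_of_nonneg_left hptwise hcpos.le]
  rw [hnorm] at step
  have hc2a : c * mI j m (2*a) t * n^a ≤ momC (2*a) := by
    calc c * mI j m (2*a) t * n^a = c * (mI j m (2*a) t * n^a) := by ring
      _ ≤ c * (momC (2*a) * mI j m 0 t) := mul_le_mul_of_nonneg_left hm2a hcpos.le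
      _ = momC (2*a) * (c * mI j m 0 t) := by ring
      _ = momC (2*a) := by rw [hnorm]; ring
  have h1' : c * mI j m (2*a) t ≤ momC (2*a) * (S*S) := by
    calc c * mI j m (2*a) t = c * mI j m (2*a) t * (S * S * n^a) := by rw [hSS]; ring
      _ = (c * mI j m (2*a) t * n^a) * (S*S) := by ring
      _ ≤ momC (2*a) * (S*S) := mul_le_mul_of_nonneg_right hc2a (by positivity)
  have h2' : (1/(2*S)) * (c * mI j m (2*a) t) ≤ momC (2*a) * S / 2 := by
    calc (1/(2*S)) * (c * mI j m (2*a) t) ≤ (1/(2*S)) * (momC (2*a) * (S*S)) :=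
          mul_le_mul_of_nonneg_left h1' (by positivity)
      _ = momC (2*a) * S / 2 := by field_simp
  have hfinal : c * aI j m a t ≤ (1 + momC (2*a))/2 * S := by
    have : (1 + momC (2*a))/2 * S = S/2 + momC (2*a) * S / 2 := by ring
    linarith [step, h2']
  rw [hc, hS] at hfinal
  exact hfinal


-- hypotheses about t for valid i
lemma t_facts (j m : ℕ) :
    0 ≤ (2*(j:ℝ)+1)/(2*((j:ℝ)+m+1)) ∧ (2*(j:ℝ)+1)/(2*((j:ℝ)+m+1)) ≤ 1 ∧
    |((j:ℝ)+1) - ((j:ℝ)+m+2)*((2*(j:ℝ)+1)/(2*((j:ℝ)+m+1)))| ≤ 1 := by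
  have hj0 : (0:ℝ) ≤ (j:ℝ) := Nat.cast_nonneg j
  have hm0 : (0:ℝ) ≤ (m:ℝ) := Nat.cast_nonneg m
  have hd : (0:ℝ) < 2*((j:ℝ)+m+1) := by linarith
  refine ⟨by positivity, ?_, ?_⟩
  · rw [div_le_one hd]; linarith
  · have heq : ((j:ℝ)+1) - ((j:ℝ)+m+2)*((2*(j:ℝ)+1)/(2*((j:ℝ)+m+1)))
        = ((m:ℝ) - (j:ℝ))/(2*((j:ℝ)+m+1)) := by
      field_simp
      ring
    rw [heq, abs_div, abs_of_pos hd, div_le_one hd]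
    rw [abs_le]
    constructor <;> linarith

/-- For an odd positive integer `a`, the expected total displacement to the
power `a` of the order statistics of `n` uniform points on `[0,1]` to the anchors
`tᵢ = (2i-1)/(2n)` is `Θ(n^{1-a/2})`. -/
theorem stmt2 (a : ℕ) (ha : 0 < a) (hao : Odd a) :
    ∃ c₁ c₂ : ℝ, 0 < c₁ ∧ c₁ ≤ c₂ ∧ ∃ N : ℕ, ∀ n : ℕ, N ≤ n →
      c₁ * (n : ℝ) ^ ((1 : ℝ) - (a : ℝ) / 2)
        ≤ (∑ i ∈ Finset.Icc 1 n, (i : ℝ) * (n.choose i : ℝ) *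
            ∫ x in (0:ℝ)..1,
              |x - (2 * (i : ℝ) - 1) / (2 * n)| ^ a * x ^ (i - 1) * (1 - x) ^ (n - i)) ∧
      (∑ i ∈ Finset.Icc 1 n, (i : ℝ) * (n.choose i : ℝ) *
            ∫ x in (0:ℝ)..1,
              |x - (2 * (i : ℝ) - 1) / (2 * n)| ^ a * x ^ (i - 1) * (1 - x) ^ (n - i))
        ≤ c₂ * (n : ℝ) ^ ((1 : ℝ) - (a : ℝ) / 2) := by
  set q : ℝ := (96^3*53:ℝ) ^ (-(a:ℝ)/2) with hq
  have hqpos : 0 < q := Real.rpow_pos_of_pos (by norm_num) _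
  set C2 : ℝ := (1 + momC (2*a))/2 with hC2
  have hC2pos : 0 < C2 := by
    have := momC_nonneg (2*a)
    rw [hC2]; linarith
  refine ⟨q/8, max (q/8) C2, by positivity, le_max_left _ _, 16, fun n hn => ?_⟩
  have hn0 : 0 < n := by omega
  have hnR : (0:ℝ) < (n:ℝ) := by exact_mod_cast hn0
  -- rewriting each term
  have hterm : ∀ i ∈ Finset.Icc 1 n, ∃ j m : ℕ, i = j+1 ∧ n = j+m+1 ∧
      (i : ℝ) * (n.choose i : ℝ) *
        (∫ x in (0:ℝ)..1, |x - (2 * (i : ℝ) - 1) / (2 * n)| ^ a * x ^ (i - 1) * (1 - x) ^ (n - i))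
      = ((j:ℝ)+1) * (((j+m+1).choose (j+1) : ℕ) : ℝ)
          * aI j m a ((2*(j:ℝ)+1)/(2*((j:ℝ)+m+1))) := by
    intro i hi
    rw [Finset.mem_Icc] at hi
    refine ⟨i-1, n-i, by omega, by omega, ?_⟩
    have hi1 : ((i-1 : ℕ):ℝ) = (i:ℝ) - 1 := by
      push_cast [Nat.cast_sub hi.1]
      ring
    have hnm : ((n-i : ℕ):ℝ) = (n:ℝ) - i := by
      push_cast [Nat.cast_sub hi.2]
      ring
    have hch : (n.choose i : ℝ) = ((((i-1)+(n-i)+1).choose ((i-1)+1) : ℕ) : ℝ) := by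
      congr 2 <;> omega
    have htv : (2 * (i : ℝ) - 1) / (2 * n) = (2*((i-1:ℕ):ℝ)+1)/(2*(((i-1:ℕ):ℝ)+((n-i:ℕ):ℝ)+1)) := by
      rw [hi1, hnm]
      congr 1 <;> ring
    have hInt : (∫ x in (0:ℝ)..1, |x - (2 * (i : ℝ) - 1) / (2 * n)| ^ a * x ^ (i - 1) * (1 - x) ^ (n - i))
        = aI (i-1) (n-i) a ((2*((i-1:ℕ):ℝ)+1)/(2*(((i-1:ℕ):ℝ)+((n-i:ℕ):ℝ)+1))) := by
      rw [aI, ← htv]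
      apply intervalIntegral.integral_congr
      intro x _
      show |x - (2 * (i : ℝ) - 1) / (2 * n)| ^ a * x ^ (i - 1) * (1 - x) ^ (n - i) = _
      ring
    rw [hInt, hi1, hch]
    ring_nf
  -- upper bound
  have hSn : (n:ℝ) ^ ((1:ℝ) - (a:ℝ)/2) = (n:ℝ) * (n:ℝ) ^ (-(a:ℝ)/2) := by
    rw [show (1:ℝ) - (a:ℝ)/2 = 1 + (-(a:ℝ)/2) by ring, Real.rpow_add hnR, Real.rpow_one]
  have hSpos : (0:ℝ) < (n:ℝ) ^ (-(a:ℝ)/2) := Real.rpow_pos_of_pos hnR _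
  constructor
  · -- lower bound
    set M : Finset ℕ := Finset.Icc (n/4+1) (n/2) with hM
    have hsub : M ⊆ Finset.Icc 1 n := by
      rw [hM]
      apply Finset.Icc_subset_Icc <;> omega
    have hnonneg : ∀ i ∈ Finset.Icc 1 n, 0 ≤ (i : ℝ) * (n.choose i : ℝ) *
        (∫ x in (0:ℝ)..1, |x - (2 * (i : ℝ) - 1) / (2 * n)| ^ a * x ^ (i - 1) * (1 - x) ^ (n - i)) := by
      intro i hi
      have hint : 0 ≤ (∫ x in (0:ℝ)..1, |x - (2 * (i : ℝ) - 1) / (2 * n)| ^ a * x ^ (i - 1) * (1 - x) ^ (n - i)) := by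
        apply intervalIntegral.integral_nonneg zero_le_one
        intro x hx
        have h1x : (0:ℝ) ≤ 1 - x := by linarith [hx.2]
        have h0x : (0:ℝ) ≤ x := hx.1
        positivity
      positivity
    have hlow : ∀ i ∈ M, q * (n:ℝ) ^ (-(a:ℝ)/2) ≤ (i : ℝ) * (n.choose i : ℝ) *
        (∫ x in (0:ℝ)..1, |x - (2 * (i : ℝ) - 1) / (2 * n)| ^ a * x ^ (i - 1) * (1 - x) ^ (n - i)) := by
      intro i hiM
      have hi : i ∈ Finset.Icc 1 n := hsub hiM
      rw [hM, Finset.mem_Icc] at hiM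
      obtain ⟨j, m, hij, hnjm, heq⟩ := hterm i hi
      rw [heq]
      have hcast : ((j:ℝ)+m+1) = (n:ℝ) := by
        rw [hnjm]; push_cast; ring
      have hf := t_facts j m
      have hj4 : ((j:ℝ)+m+1) ≤ 4*((j:ℝ)+1) := by
        rw [hcast]
        have h4 : n ≤ 4*i := by omega
        have : (n:ℝ) ≤ 4*(i:ℝ) := by exact_mod_cast h4
        rw [hij] at this
        push_cast at this
        linarith
      have hm2 : ((j:ℝ)+m+1) ≤ 2*((m:ℝ)+1) := by
        rw [hcast]
        have h2 : n ≤ 2*(m+1) := by omega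
        have : (n:ℝ) ≤ 2*((m:ℝ)+1) := by exact_mod_cast h2
        linarith
      have := term_lower j m a ha _ hf.1 hf.2.1 hf.2.2 hj4 hm2
      rw [hq, ← hcast]
      exact this
    have hcard : (n:ℝ)/8 ≤ (M.card : ℝ) := by
      rw [hM, Nat.card_Icc]
      have h8 : n ≤ 8 * (n/2 + 1 - (n/4+1)) := by omega
      have : (n:ℝ) ≤ 8 * ((n/2 + 1 - (n/4+1) : ℕ) : ℝ) := by exact_mod_cast h8
      linarith
    calc q/8 * (n : ℝ) ^ ((1 : ℝ) - (a : ℝ) / 2)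
        = ((n:ℝ)/8) * (q * (n:ℝ) ^ (-(a:ℝ)/2)) := by rw [hSn]; ring
      _ ≤ (M.card : ℝ) * (q * (n:ℝ) ^ (-(a:ℝ)/2)) := by
          apply mul_le_mul_of_nonneg_right hcard (by positivity)
      _ ≤ ∑ i ∈ M, (i : ℝ) * (n.choose i : ℝ) *
            (∫ x in (0:ℝ)..1, |x - (2 * (i : ℝ) - 1) / (2 * n)| ^ a * x ^ (i - 1) * (1 - x) ^ (n - i)) := by
          have := Finset.card_nsmul_le_sum M _ _ hlow
          rwa [nsmul_eq_mul] at this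
      _ ≤ ∑ i ∈ Finset.Icc 1 n, (i : ℝ) * (n.choose i : ℝ) *
            (∫ x in (0:ℝ)..1, |x - (2 * (i : ℝ) - 1) / (2 * n)| ^ a * x ^ (i - 1) * (1 - x) ^ (n - i)) :=
          Finset.sum_le_sum_of_subset_of_nonneg hsub (fun i hi _ => hnonneg i hi)
  · -- upper bound
    have hup : ∀ i ∈ Finset.Icc 1 n, (i : ℝ) * (n.choose i : ℝ) *
        (∫ x in (0:ℝ)..1, |x - (2 * (i : ℝ) - 1) / (2 * n)| ^ a * x ^ (i - 1) * (1 - x) ^ (n - i))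
        ≤ C2 * (n:ℝ) ^ (-(a:ℝ)/2) := by
      intro i hi
      obtain ⟨j, m, hij, hnjm, heq⟩ := hterm i hi
      rw [heq]
      have hcast : ((j:ℝ)+m+1) = (n:ℝ) := by
        rw [hnjm]; push_cast; ring
      have hf := t_facts j m
      have := term_upper j m a ha _ hf.1 hf.2.1 hf.2.2
      rw [hC2, ← hcast]
      exact this
    calc (∑ i ∈ Finset.Icc 1 n, (i : ℝ) * (n.choose i : ℝ) *
            (∫ x in (0:ℝ)..1, |x - (2 * (i : ℝ) - 1) / (2 * n)| ^ a * x ^ (i - 1) * (1 - x) ^ (n - i)))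
        ≤ ∑ _i ∈ Finset.Icc 1 n, C2 * (n:ℝ) ^ (-(a:ℝ)/2) := Finset.sum_le_sum hup
      _ = (n:ℝ) * (C2 * (n:ℝ) ^ (-(a:ℝ)/2)) := by
          rw [Finset.sum_const, Nat.card_Icc, nsmul_eq_mul]
          norm_num
      _ = C2 * (n : ℝ) ^ ((1 : ℝ) - (a : ℝ) / 2) := by rw [hSn]; ring
      _ ≤ max (q/8) C2 * (n : ℝ) ^ ((1 : ℝ) - (a : ℝ) / 2) := by
          apply mul_le_mul_of_nonneg_right (le_max_right _ _) (by positivity)
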